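/- For all sufficiently large n (n ≥ 32 suffices), and any symmetric Boolean function f:{0,1}^n→{0,1} other than the constant 0 function, the constant 1 function, the parity function x ↦ |x| mod 2, and the negation of the parity function, there exists w ∈ {0,1}^n such that the Fourier coefficient f̃(w) ≠ 0 and n/8 ≤ |w| ≤ 7n/8. -/

import Mathlib

namespace SymXOR

/-- Hamming weight of a Boolean vector. -/
def hammingWeight {n : ℕ} (x : Fin n → Bool) : ℕ :=
  (Finset.univ.filter fun i => x i = true).card

/-- The inner product `x·w = Σ_i x_i w_i` of two Boolean vectors. -/
def dotProd {n : ℕ} (x w : Fin n → Bool) : ℕ :=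
  (Finset.univ.filter fun i => x i = true ∧ w i = true).card

/-- A Boolean value viewed as a real number. -/
noncomputable def boolToReal (b : Bool) : ℝ := if b then 1 else 0

/-- The Fourier coefficient `f̃(w) = 2^{-n} Σ_x (-1)^{x·w} f(x)`. -/
noncomputable def fourierCoeff {n : ℕ} (f : (Fin n → Bool) → Bool) (w : Fin n → Bool) : ℝ :=
  (1 / 2 ^ n) * ∑ x : Fin n → Bool, (-1 : ℝ) ^ dotProd x w * boolToReal (f x)

open Finset Polynomial

def wt {α : Type} [Fintype α] (x : α → Bool) : ℕ :=
  (Finset.univ.filter fun i => x i = true).card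

lemma wt_le_card {α : Type} [Fintype α] (x : α → Bool) : wt x ≤ Fintype.card α :=
  (Finset.card_filter_le _ _).trans_eq (Finset.card_univ)

lemma card_wt_eq {α : Type} [Fintype α] [DecidableEq α] (j : ℕ) :
    ((Finset.univ : Finset (α → Bool)).filter fun y => wt y = j).card
      = (Fintype.card α).choose j := by
  rw [← Finset.card_univ (α := α), ← Finset.card_powersetCard j (Finset.univ : Finset α)]
  refine Finset.card_bij' (fun y _ => Finset.univ.filter fun i => y i = true)
    (fun s _ => fun i => decide (i ∈ s)) ?_ ?_ ?_ ?_
  · intro y hy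
    have hy := (Finset.mem_filter.mp hy).2
    simp only [wt] at hy
    simp [Finset.mem_powersetCard, hy]
  · intro s hs
    simp only [Finset.mem_powersetCard] at hs
    refine Finset.mem_filter.mpr ⟨Finset.mem_univ _, ?_⟩
    simp only [wt]
    rw [← hs.2]
    congr 1
    ext i
    simp
  · intro y _
    funext i
    simp
  · intro s _
    ext i
    simp

lemma sum_wt {α : Type} [Fintype α] [DecidableEq α] (F : ℕ → ℝ) :
    ∑ y : α → Bool, F (wt y)
      = ∑ j ∈ Finset.range (Fintype.card α + 1), ((Fintype.card α).choose j : ℝ) * F j := by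
  rw [← Finset.sum_fiberwise_of_maps_to (g := wt) (t := Finset.range (Fintype.card α + 1))
    (fun y _ => Finset.mem_range.mpr (Nat.lt_succ_of_le (wt_le_card y))) (fun y => F (wt y))]
  refine Finset.sum_congr rfl fun j hj => ?_
  rw [Finset.sum_congr rfl (fun y hy => by rw [(Finset.mem_filter.mp hy).2]),
    Finset.sum_const, card_wt_eq, nsmul_eq_mul]

lemma wt_res {α : Type} [Fintype α] (p : α → Prop) [DecidablePred p] (y : α → Bool) :
    wt (fun i : {i // p i} => y i.val)
      = (Finset.univ.filter fun i => p i ∧ y i = true).card := by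
  rw [wt, ← Fintype.card_subtype, ← Fintype.card_subtype]
  exact Fintype.card_congr (Equiv.subtypeSubtypeEquivSubtypeInter p (fun i => y i = true))

lemma wt_split {α : Type} [Fintype α] (p : α → Prop) [DecidablePred p] (y : α → Bool) :
    wt y = wt (fun i : {i // p i} => y i.val) + wt (fun i : {i // ¬ p i} => y i.val) := by
  rw [wt_res, wt_res, wt]
  rw [← Finset.card_filter_add_card_filter_not (s := Finset.univ.filter fun i => y i = true) p]
  congr 1 <;> · rw [Finset.filter_filter]; congr 1; ext i
                simp only [Finset.mem_filter, Finset.mem_univ, true_and]; tauto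

def splitE {α : Type} [Fintype α] (p : α → Prop) [DecidablePred p] :
    (α → Bool) ≃ ({i // p i} → Bool) × ({i // ¬ p i} → Bool) where
  toFun y := (fun i => y i.val, fun i => y i.val)
  invFun z := fun i => if h : p i then z.1 ⟨i, h⟩ else z.2 ⟨i, h⟩
  left_inv y := by funext i; by_cases h : p i <;> simp [h]
  right_inv z := by
    ext i
    · simp [i.2]
    · simp [i.2]

lemma master {α : Type} [Fintype α] [DecidableEq α] (p : α → Prop) [DecidablePred p]
    (H : ℕ → ℕ → ℝ) :
    ∑ y : α → Bool, H (wt (fun i : {i // p i} => y i.val)) (wt (fun i : {i // ¬ p i} => y i.val))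
      = ∑ j ∈ Finset.range (Fintype.card {i // p i} + 1),
          ∑ j' ∈ Finset.range (Fintype.card {i // ¬ p i} + 1),
            ((Fintype.card {i // p i}).choose j : ℝ)
              * ((Fintype.card {i // ¬ p i}).choose j' : ℝ) * H j j' := by
  classical
  rw [← Equiv.sum_comp (splitE p).symm
    (fun y => H (wt (fun i : {i // p i} => y i.val)) (wt (fun i : {i // ¬ p i} => y i.val)))]
  have key : ∀ z : ({i // p i} → Bool) × ({i // ¬ p i} → Bool),
      (fun i : {i // p i} => ((splitE p).symm z) i.val) = z.1 ∧
      (fun i : {i // ¬ p i} => ((splitE p).symm z) i.val) = z.2 := by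
    intro z
    constructor
    · funext i; show ((splitE p) ((splitE p).symm z)).1 i = _; rw [Equiv.apply_symm_apply]
    · funext i; show ((splitE p) ((splitE p).symm z)).2 i = _; rw [Equiv.apply_symm_apply]
  rw [Finset.sum_congr rfl (fun z _ => by rw [(key z).1, (key z).2])]
  rw [Fintype.sum_prod_type]
  rw [Finset.sum_congr rfl (fun z1 _ => sum_wt (fun j' => H (wt z1) j'))]
  rw [sum_wt (fun j => ∑ j' ∈ Finset.range (Fintype.card {i // ¬ p i} + 1),
      ((Fintype.card {i // ¬ p i}).choose j' : ℝ) * H j j')]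
  refine Finset.sum_congr rfl fun j _ => ?_
  rw [Finset.mul_sum]
  refine Finset.sum_congr rfl fun j' _ => by ring

lemma ham_eq_wt {n : ℕ} (x : Fin n → Bool) : hammingWeight x = wt x := rfl

def xcan (n m : ℕ) : Fin n → Bool := fun i => decide (i.val < m)

lemma wt_xcan {n m : ℕ} (hm : m ≤ n) : wt (xcan n m) = m := by
  rw [wt]
  have : (Finset.univ.filter fun i : Fin n => xcan n m i = true)
      = Finset.univ.filter fun i : Fin n => i.val < m := by
    ext i; simp [xcan]
  rw [this]
  rw [← Fintype.card_subtype]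
  have e : {i : Fin n // i.val < m} ≃ Fin m :=
    { toFun := fun x => ⟨x.1.val, x.2⟩
      invFun := fun j => ⟨⟨j.val, lt_of_lt_of_le j.2 hm⟩, j.2⟩
      left_inv := fun x => rfl
      right_inv := fun j => rfl }
  rw [Fintype.card_congr e, Fintype.card_fin]

lemma dot_res {n : ℕ} (x w : Fin n → Bool) :
    dotProd x w = wt (fun i : {i // x i = true} => w i.val) := by
  rw [wt_res, dotProd]

lemma dot_comm {n : ℕ} (x w : Fin n → Bool) : dotProd x w = dotProd w x := by
  rw [dotProd, dotProd]; congr 1; ext i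
  simp only [Finset.mem_filter, Finset.mem_univ, true_and]; tauto

lemma dot_le_wt {n : ℕ} (x w : Fin n → Bool) : dotProd x w ≤ wt x := by
  apply Finset.card_le_card
  intro i hi
  simp only [Finset.mem_filter, Finset.mem_univ, true_and] at *
  exact hi.1

lemma card_sub_true {n : ℕ} (w : Fin n → Bool) :
    Fintype.card {i : Fin n // w i = true} = wt w := by
  rw [Fintype.card_subtype, wt]

lemma card_sub_false {n : ℕ} (w : Fin n → Bool) :
    Fintype.card {i : Fin n // ¬ (w i = true)} = n - wt w := by
  rw [Fintype.card_subtype_compl, card_sub_true, Fintype.card_fin]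

noncomputable def Phi {n : ℕ} (f : (Fin n → Bool) → Bool) (k : ℕ) : ℝ :=
  (1 / 2 ^ n) * ∑ j ∈ Finset.range (k + 1), ∑ j' ∈ Finset.range (n - k + 1),
    (k.choose j : ℝ) * ((n - k).choose j' : ℝ)
      * ((-1 : ℝ) ^ j * boolToReal (f (xcan n (j + j'))))

lemma fourier_eq_Phi {n : ℕ} (f : (Fin n → Bool) → Bool)
    (hsymm : ∀ x y, hammingWeight x = hammingWeight y → f x = f y)
    (w : Fin n → Bool) : fourierCoeff f w = Phi f (wt w) := by
  rw [fourierCoeff, Phi]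
  congr 1
  have hterm : ∀ x : Fin n → Bool,
      (-1 : ℝ) ^ dotProd x w * boolToReal (f x)
        = (fun a b => (-1 : ℝ) ^ a * boolToReal (f (xcan n (a + b))))
            (wt (fun i : {i // w i = true} => x i.val))
            (wt (fun i : {i // ¬ (w i = true)} => x i.val)) := by
    intro x
    have h1 : dotProd x w = wt (fun i : {i // w i = true} => x i.val) := by
      rw [dot_comm, dot_res]
    have h2 : f x = f (xcan n (wt (fun i : {i // w i = true} => x i.val)
        + wt (fun i : {i // ¬ (w i = true)} => x i.val))) := by
      apply hsymm
      rw [ham_eq_wt, ham_eq_wt, wt_xcan, ← wt_split]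
      rw [← wt_split]
      exact (wt_le_card x).trans_eq (Fintype.card_fin n)
    rw [h1, h2]
  rw [Finset.sum_congr rfl (fun x _ => hterm x)]
  rw [master (fun i => w i = true) (fun a b => (-1 : ℝ) ^ a * boolToReal (f (xcan n (a + b))))]
  rw [card_sub_true, card_sub_false]

lemma pow_dot_eq_prod {n : ℕ} (x w : Fin n → Bool) :
    (-1 : ℝ) ^ dotProd x w
      = ∏ i : Fin n, (if x i = true ∧ w i = true then (-1 : ℝ) else 1) := by
  rw [dotProd, ← Finset.prod_const (b := (-1 : ℝ)), Finset.prod_filter]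

lemma ortho {n : ℕ} (x y : Fin n → Bool) :
    ∑ w : Fin n → Bool, (-1 : ℝ) ^ dotProd y w * (-1 : ℝ) ^ dotProd x w
      = if y = x then (2 : ℝ) ^ n else 0 := by
  classical
  have hterm : ∀ w : Fin n → Bool,
      (-1 : ℝ) ^ dotProd y w * (-1 : ℝ) ^ dotProd x w
        = ∏ i : Fin n, ((if y i = true ∧ w i = true then (-1 : ℝ) else 1)
            * (if x i = true ∧ w i = true then (-1 : ℝ) else 1)) := by
    intro w
    rw [pow_dot_eq_prod, pow_dot_eq_prod, Finset.prod_mul_distrib]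
  rw [Finset.sum_congr rfl fun w _ => hterm w]
  have exch := Finset.prod_univ_sum (fun _ : Fin n => (Finset.univ : Finset Bool))
    (fun i b => (if y i = true ∧ b = true then (-1 : ℝ) else 1)
      * (if x i = true ∧ b = true then (-1 : ℝ) else 1))
  rw [Fintype.piFinset_univ] at exch
  rw [← exch]
  have hfac : ∀ i : Fin n,
      (∑ b : Bool, (if y i = true ∧ b = true then (-1 : ℝ) else 1)
        * (if x i = true ∧ b = true then (-1 : ℝ) else 1))
      = if y i = x i then 2 else 0 := by
    intro i
    rw [Fintype.sum_bool]
    cases hy : y i <;> cases hx : x i <;> norm_num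
  rw [Finset.prod_congr rfl fun i _ => hfac i]
  by_cases h : y = x
  · subst h
    simp [Finset.prod_const]
  · rw [if_neg h]
    obtain ⟨i0, hi0⟩ : ∃ i, y i ≠ x i := by
      by_contra hc
      push_neg at hc
      exact h (funext hc)
    exact Finset.prod_eq_zero (Finset.mem_univ i0) (if_neg hi0)

lemma inversion {n : ℕ} (f : (Fin n → Bool) → Bool) (x : Fin n → Bool) :
    boolToReal (f x) = ∑ w : Fin n → Bool, fourierCoeff f w * (-1 : ℝ) ^ dotProd x w := by
  classical
  have h2n : (2 : ℝ) ^ n ≠ 0 := by positivity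
  simp only [fourierCoeff]
  have step : ∀ w : Fin n → Bool,
      ((1 : ℝ) / 2 ^ n * ∑ y : Fin n → Bool, (-1 : ℝ) ^ dotProd y w * boolToReal (f y))
        * (-1 : ℝ) ^ dotProd x w
      = (1 / 2 ^ n) * ∑ y : Fin n → Bool,
          boolToReal (f y) * ((-1 : ℝ) ^ dotProd y w * (-1 : ℝ) ^ dotProd x w) := by
    intro w
    rw [mul_assoc, Finset.sum_mul]
    congr 1
    exact Finset.sum_congr rfl fun y _ => by ring
  rw [Finset.sum_congr rfl fun w _ => step w, ← Finset.mul_sum, Finset.sum_comm]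
  have inner : ∀ y : Fin n → Bool,
      ∑ w : Fin n → Bool, boolToReal (f y) * ((-1 : ℝ) ^ dotProd y w * (-1 : ℝ) ^ dotProd x w)
        = boolToReal (f y) * (if y = x then (2 : ℝ) ^ n else 0) := by
    intro y
    rw [← Finset.mul_sum, ortho]
  rw [Finset.sum_congr rfl fun y _ => inner y]
  have : ∀ y : Fin n → Bool, boolToReal (f y) * (if y = x then (2 : ℝ) ^ n else 0)
      = if y = x then boolToReal (f y) * 2 ^ n else 0 := fun y => by
    split <;> simp
  rw [Finset.sum_congr rfl fun y _ => this y, Finset.sum_ite_eq' Finset.univ x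
    (fun y => boolToReal (f y) * 2 ^ n), if_pos (Finset.mem_univ x)]
  field_simp

noncomputable def qpoly (j : ℕ) : Polynomial ℝ := (j.factorial : ℝ)⁻¹ • descPochhammer ℝ j

noncomputable def rpoly (n j : ℕ) : Polynomial ℝ :=
  (j.factorial : ℝ)⁻¹ • ((descPochhammer ℝ j).comp (Polynomial.C (n : ℝ) - Polynomial.X))

lemma qpoly_eval (j m : ℕ) : (qpoly j).eval (m : ℝ) = (m.choose j : ℝ) := by
  rw [qpoly, Polynomial.eval_smul, smul_eq_mul, descPochhammer_eval_eq_descFactorial,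
    Nat.descFactorial_eq_factorial_mul_choose]
  push_cast
  rw [← mul_assoc, inv_mul_cancel₀ (by exact_mod_cast j.factorial_ne_zero), one_mul]

lemma rpoly_eval (n j m : ℕ) (hm : m ≤ n) :
    (rpoly n j).eval (m : ℝ) = ((n - m).choose j : ℝ) := by
  rw [rpoly, Polynomial.eval_smul, smul_eq_mul, Polynomial.eval_comp]
  rw [Polynomial.eval_sub, Polynomial.eval_C, Polynomial.eval_X]
  rw [show (n : ℝ) - (m : ℝ) = ((n - m : ℕ) : ℝ) by rw [Nat.cast_sub hm]]
  rw [descPochhammer_eval_eq_descFactorial, Nat.descFactorial_eq_factorial_mul_choose]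
  push_cast
  rw [← mul_assoc, inv_mul_cancel₀ (by exact_mod_cast j.factorial_ne_zero), one_mul]

lemma qpoly_deg (j : ℕ) : (qpoly j).natDegree ≤ j :=
  (Polynomial.natDegree_smul_le _ _).trans (by rw [descPochhammer_natDegree])

lemma rpoly_deg (n j : ℕ) : (rpoly n j).natDegree ≤ j := by
  refine (Polynomial.natDegree_smul_le _ _).trans (Polynomial.natDegree_comp_le.trans ?_)
  rw [descPochhammer_natDegree]
  have : Polynomial.C (n : ℝ) - Polynomial.X = -(Polynomial.X - Polynomial.C (n : ℝ)) := by ring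
  rw [this, Polynomial.natDegree_neg, Polynomial.natDegree_X_sub_C, mul_one]

lemma sum_extend (N M : ℕ) (h : M ≤ N) (G : ℕ → ℝ) (h0 : ∀ j, M < j → G j = 0) :
    ∑ j ∈ Finset.range (M + 1), G j = ∑ j ∈ Finset.range (N + 1), G j :=
  Finset.sum_subset (Finset.range_subset_range.mpr (by omega))
    (fun j hj hnj => h0 j (by simp only [Finset.mem_range] at hj hnj; omega))

noncomputable def Ssum (n : ℕ) (c : ℕ → ℝ) (m : ℕ) : ℝ :=
  ∑ w : Fin n → Bool, c (wt w) * (-1 : ℝ) ^ dotProd (xcan n m) w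

noncomputable def ppoly (n : ℕ) (c : ℕ → ℝ) : Polynomial ℝ :=
  ∑ j ∈ Finset.range (n + 1), ∑ j' ∈ Finset.range (n + 1),
    ((-1 : ℝ) ^ j * c (j + j')) • (qpoly j * rpoly n j')

lemma ppoly_deg (n : ℕ) (c : ℕ → ℝ) (d : ℕ) (hc : ∀ k, d < k → c k = 0) :
    (ppoly n c).natDegree ≤ d := by
  refine Polynomial.natDegree_sum_le_of_forall_le _ _ fun j _ =>
    Polynomial.natDegree_sum_le_of_forall_le _ _ fun j' _ => ?_
  by_cases h : d < j + j'
  · rw [hc _ h, mul_zero, zero_smul, Polynomial.natDegree_zero]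
    exact Nat.zero_le d
  · push_neg at h
    refine (Polynomial.natDegree_smul_le _ _).trans (Polynomial.natDegree_mul_le.trans ?_)
    exact le_trans (add_le_add (qpoly_deg j) (rpoly_deg n j')) h

lemma ppoly_eval (n : ℕ) (c : ℕ → ℝ) (m : ℕ) (hm : m ≤ n) :
    (ppoly n c).eval (m : ℝ) = Ssum n c m := by
  classical
  have hterm : ∀ w : Fin n → Bool,
      c (wt w) * (-1 : ℝ) ^ dotProd (xcan n m) w
        = (fun a b => c (a + b) * (-1 : ℝ) ^ a)
            (wt (fun i : {i // xcan n m i = true} => w i.val))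
            (wt (fun i : {i // ¬ (xcan n m i = true)} => w i.val)) := by
    intro w
    rw [wt_split (fun i => xcan n m i = true) w, dot_res]
  rw [Ssum, Finset.sum_congr rfl fun w _ => hterm w,
    master (fun i => xcan n m i = true) (fun a b => c (a + b) * (-1 : ℝ) ^ a),
    card_sub_true, card_sub_false, wt_xcan hm]
  rw [ppoly, Polynomial.eval_finset_sum]
  have inner_eval : ∀ j, (Polynomial.eval (m : ℝ)
        (∑ j' ∈ Finset.range (n + 1), ((-1 : ℝ) ^ j * c (j + j')) • (qpoly j * rpoly n j')))
      = ∑ j' ∈ Finset.range (n + 1),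
          (m.choose j : ℝ) * ((n - m).choose j' : ℝ) * (c (j + j') * (-1 : ℝ) ^ j) := by
    intro j
    rw [Polynomial.eval_finset_sum]
    refine Finset.sum_congr rfl fun j' _ => ?_
    rw [Polynomial.eval_smul, Polynomial.eval_mul, qpoly_eval, rpoly_eval n j' m hm,
      smul_eq_mul]
    ring
  rw [Finset.sum_congr rfl fun j _ => inner_eval j]
  have key : ∀ (A B : ℕ) (T : ℕ → ℕ → ℝ), A ≤ n → B ≤ n →
      (∀ j j', A < j → T j j' = 0) → (∀ j j', B < j' → T j j' = 0) →
      ∑ j ∈ Finset.range (A + 1), ∑ j' ∈ Finset.range (B + 1), T j j'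
        = ∑ j ∈ Finset.range (n + 1), ∑ j' ∈ Finset.range (n + 1), T j j' := by
    intro A B T hA hB hTA hTB
    calc ∑ j ∈ Finset.range (A + 1), ∑ j' ∈ Finset.range (B + 1), T j j'
        = ∑ j ∈ Finset.range (A + 1), ∑ j' ∈ Finset.range (n + 1), T j j' :=
          Finset.sum_congr rfl fun j _ => sum_extend n B hB (T j) (hTB j)
      _ = ∑ j ∈ Finset.range (n + 1), ∑ j' ∈ Finset.range (n + 1), T j j' :=
          sum_extend n A hA _ (fun j hj => Finset.sum_eq_zero fun j' _ => hTA j j' hj)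
  exact (key m (n - m)
    (fun j j' => (m.choose j : ℝ) * ((n - m).choose j' : ℝ) * (c (j + j') * (-1 : ℝ) ^ j))
    hm (by omega)
    (fun j j' h => by rw [Nat.choose_eq_zero_of_lt h]; push_cast; ring)
    (fun j j' h => by rw [Nat.choose_eq_zero_of_lt h]; push_cast; ring)).symm

lemma wt_neg {n : ℕ} (v : Fin n → Bool) : wt (fun i => !(v i)) = n - wt v := by
  have h := Finset.card_filter_add_card_filter_not
    (s := (Finset.univ : Finset (Fin n))) (fun i => v i = true)
  rw [Finset.card_univ, Fintype.card_fin] at h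
  have e : (Finset.univ.filter fun i : Fin n => (!(v i)) = true)
      = Finset.univ.filter fun i : Fin n => ¬ (v i = true) := by
    ext i; simp
  rw [wt, wt, e]
  omega

lemma dot_neg {n : ℕ} (x v : Fin n → Bool) :
    dotProd x (fun i => !(v i)) = wt x - dotProd x v := by
  have h := Finset.card_filter_add_card_filter_not
    (s := Finset.univ.filter fun i : Fin n => x i = true) (fun i => v i = true)
  rw [Finset.filter_filter, Finset.filter_filter] at h
  have e1 : dotProd x v = ((Finset.univ : Finset (Fin n)).filter
      fun i => x i = true ∧ v i = true).card := rfl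
  have e2 : dotProd x (fun i => !(v i)) = ((Finset.univ : Finset (Fin n)).filter
      fun i => x i = true ∧ ¬ (v i = true)).card := by
    rw [dotProd]; congr 1; ext i; simp
  rw [e1, e2, wt]
  omega

lemma neg_one_pow_sub (a b : ℕ) (hb : b ≤ a) :
    (-1 : ℝ) ^ (a - b) = (-1 : ℝ) ^ a * (-1 : ℝ) ^ b := by
  have h1 : (-1 : ℝ) ^ (a - b) * (-1 : ℝ) ^ b = (-1 : ℝ) ^ a := by
    rw [← pow_add, Nat.sub_add_cancel hb]
  have h2 : (-1 : ℝ) ^ b * (-1 : ℝ) ^ b = 1 := by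
    rw [← pow_add]; exact Even.neg_one_pow ⟨b, rfl⟩
  calc (-1 : ℝ) ^ (a - b) = (-1 : ℝ) ^ (a - b) * ((-1 : ℝ) ^ b * (-1 : ℝ) ^ b) := by
        rw [h2, mul_one]
    _ = (-1 : ℝ) ^ a * (-1 : ℝ) ^ b := by rw [← mul_assoc, h1]

lemma S_neg {n : ℕ} (c : ℕ → ℝ) (m : ℕ) (hm : m ≤ n) :
    ∑ w : Fin n → Bool, c (n - wt w) * (-1 : ℝ) ^ dotProd (xcan n m) w
      = (-1 : ℝ) ^ m * Ssum n c m := by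
  classical
  have einv : Function.Involutive (fun w : Fin n → Bool => fun i => !(w i)) := by
    intro w; funext i; simp
  rw [← Equiv.sum_comp einv.toPerm
    (fun w => c (n - wt w) * (-1 : ℝ) ^ dotProd (xcan n m) w), Ssum, Finset.mul_sum]
  refine Finset.sum_congr rfl fun v _ => ?_
  show c (n - wt (fun i => !(v i))) * (-1 : ℝ) ^ dotProd (xcan n m) (fun i => !(v i)) = _
  rw [wt_neg, dot_neg, Nat.sub_sub_self (le_trans (wt_le_card v) (le_of_eq (Fintype.card_fin n))),
    wt_xcan hm, neg_one_pow_sub m (dotProd (xcan n m) v)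
      (le_trans (dot_le_wt (xcan n m) v) (le_of_eq (wt_xcan hm)))]
  ring

lemma const_of_low_degree (p : Polynomial ℝ) (d J : ℕ) (hdeg : p.natDegree ≤ d)
    (hJ : 2 * d < J + 1) (hval : ∀ j : ℕ, j ≤ J → p.eval (j : ℝ) = 0 ∨ p.eval (j : ℝ) = 1) :
    p = 0 ∨ p = 1 := by
  classical
  set S0 := (Finset.range (J + 1)).filter (fun j : ℕ => p.eval (j : ℝ) = 0) with hS0
  set S1 := (Finset.range (J + 1)).filter (fun j : ℕ => ¬ (p.eval (j : ℝ) = 0)) with hS1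
  have hcard : S0.card + S1.card = J + 1 := by
    rw [hS0, hS1, Finset.card_filter_add_card_filter_not, Finset.card_range]
  have key : ∀ (q : Polynomial ℝ) (S : Finset ℕ), q.natDegree ≤ d → d < S.card →
      (∀ j ∈ S, q.eval (j : ℝ) = 0) → q = 0 := by
    intro q S hq hS hz
    apply Polynomial.eq_zero_of_natDegree_lt_card_of_eval_eq_zero q
      (ι := {j // j ∈ S}) (f := fun j => ((j : ℕ) : ℝ))
    · intro a b hab
      exact Subtype.ext (Nat.cast_injective hab)
    · exact fun j => hz j j.2
    · rw [Fintype.card_coe]; omega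
  rcases Nat.lt_or_ge d S0.card with h0 | h0
  · left
    refine key p S0 hdeg h0 fun j hj => ?_
    rw [hS0] at hj
    exact (Finset.mem_filter.mp hj).2
  · right
    have h1 : d < S1.card := by omega
    have hsub : p - 1 = 0 := by
      refine key (p - 1) S1 ?_ h1 ?_
      · refine (Polynomial.natDegree_sub_le p 1).trans ?_
        simp [hdeg]
      · intro j hj
        rw [hS1, Finset.mem_filter, Finset.mem_range] at hj
        have := hval j (by omega)
        rcases this with h | h
        · exact absurd h hj.2
        · simp [Polynomial.eval_sub, h]
    exact sub_eq_zero.mp hsub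

/-- For all `n ≥ 32`, any symmetric Boolean function `f` on `{0,1}^n` other
than the constant 0 function, the constant 1 function, the parity function and its
negation, has a nonzero Fourier coefficient `f̃(w)` with `n/8 ≤ |w| ≤ 7n/8`. -/
theorem symmetric_has_middle_fourier_coeff {n : ℕ} (hn : 32 ≤ n)
    (f : (Fin n → Bool) → Bool)
    (hsymm : ∀ x y, hammingWeight x = hammingWeight y → f x = f y)
    (h0 : f ≠ fun _ => false)
    (h1 : f ≠ fun _ => true)
    (hpar : f ≠ fun x => decide (hammingWeight x % 2 = 1))
    (hnpar : f ≠ fun x => !decide (hammingWeight x % 2 = 1)) :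
    ∃ w : Fin n → Bool, fourierCoeff f w ≠ 0 ∧
      (n : ℝ) / 8 ≤ (hammingWeight w : ℝ) ∧ (hammingWeight w : ℝ) ≤ 7 * n / 8 := by
  classical
  by_contra hcon
  push_neg at hcon
  set d := n / 8 with hd
  have hd8 : 8 * d ≤ n ∧ n < 8 * d + 8 := by constructor <;> omega
  have hAco : ∀ w, fourierCoeff f w = Phi f (wt w) := fourier_eq_Phi f hsymm
  set φ : ℕ → ℝ := Phi f with hφdef
  have hband : ∀ k, k ≤ n → d < k → d < n - k → φ k = 0 := by
    intro k hk hk1 hk2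
    by_contra hφ
    have hw : fourierCoeff f (xcan n k) ≠ 0 := by
      rw [hAco, wt_xcan hk]; exact hφ
    have hwt : (hammingWeight (xcan n k) : ℝ) = (k : ℝ) := by
      rw [ham_eq_wt, wt_xcan hk]
    have hlow : (n : ℝ) / 8 ≤ (hammingWeight (xcan n k) : ℝ) := by
      rw [hwt]
      have : n < 8 * k := by omega
      have : (n : ℝ) < 8 * k := by exact_mod_cast this
      linarith
    have hhigh : (hammingWeight (xcan n k) : ℝ) ≤ 7 * n / 8 := by
      rw [hwt]
      have : 8 * k ≤ 7 * n := by omega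
      have : (8 : ℝ) * k ≤ 7 * n := by exact_mod_cast this
      linarith
    exact absurd hhigh (not_le_of_gt (hcon (xcan n k) hw hlow))
  set c1 : ℕ → ℝ := fun k => if k ≤ d then φ k else 0 with hc1
  set c2 : ℕ → ℝ := fun k => if k ≤ d then φ (n - k) else 0 with hc2
  have hsplitφ : ∀ w : Fin n → Bool, φ (wt w) = c1 (wt w) + c2 (n - wt w) := by
    intro w
    have hwn : wt w ≤ n := (wt_le_card w).trans_eq (Fintype.card_fin n)
    by_cases hl : wt w ≤ d
    · rw [hc1, hc2]
      simp only []
      rw [if_pos hl, if_neg (show ¬ (n - wt w ≤ d) by omega)]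
      ring
    · by_cases hh : n - wt w ≤ d
      · rw [hc1, hc2]
        simp only []
        rw [if_neg hl, if_pos hh, Nat.sub_sub_self hwn]
        ring
      · rw [hc1, hc2]
        simp only []
        rw [if_neg hl, if_neg hh, hband (wt w) hwn (by omega) (by omega)]
        ring
  have hg : ∀ m, m ≤ n → boolToReal (f (xcan n m))
      = Ssum n c1 m + (-1 : ℝ) ^ m * Ssum n c2 m := by
    intro m hm
    rw [inversion f (xcan n m)]
    calc ∑ w : Fin n → Bool, fourierCoeff f w * (-1 : ℝ) ^ dotProd (xcan n m) w
        = ∑ w : Fin n → Bool, (c1 (wt w) * (-1 : ℝ) ^ dotProd (xcan n m) w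
            + c2 (n - wt w) * (-1 : ℝ) ^ dotProd (xcan n m) w) := by
          refine Finset.sum_congr rfl fun w _ => ?_
          rw [hAco w]
          show φ (wt w) * _ = _
          rw [hsplitφ w]; ring
      _ = (∑ w : Fin n → Bool, c1 (wt w) * (-1 : ℝ) ^ dotProd (xcan n m) w)
            + ∑ w : Fin n → Bool, c2 (n - wt w) * (-1 : ℝ) ^ dotProd (xcan n m) w :=
          Finset.sum_add_distrib
      _ = Ssum n c1 m + (-1 : ℝ) ^ m * Ssum n c2 m := by rw [S_neg c2 m hm]; rfl
  have hc1z : ∀ k, d < k → c1 k = 0 := fun k hk => if_neg (by omega)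
  have hc2z : ∀ k, d < k → c2 k = 0 := fun k hk => if_neg (by omega)
  set pE := (ppoly n c1 + ppoly n c2).comp (Polynomial.C 2 * Polynomial.X) with hpE
  set pO := (ppoly n c1 - ppoly n c2).comp
    (Polynomial.C 2 * Polynomial.X + Polynomial.C 1) with hpO
  have hlin1 : (Polynomial.C (2 : ℝ) * Polynomial.X).natDegree ≤ 1 :=
    Polynomial.natDegree_mul_le.trans
      (by rw [Polynomial.natDegree_C, Polynomial.natDegree_X])
  have hlin2 : (Polynomial.C (2 : ℝ) * Polynomial.X + Polynomial.C 1).natDegree ≤ 1 :=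
    (Polynomial.natDegree_add_le _ _).trans
      (by rw [Polynomial.natDegree_C]; exact max_le hlin1 (by omega))
  have hdegE : pE.natDegree ≤ d := by
    refine Polynomial.natDegree_comp_le.trans ?_
    have h1' : (ppoly n c1 + ppoly n c2).natDegree ≤ d :=
      (Polynomial.natDegree_add_le _ _).trans
        (max_le (ppoly_deg n c1 d hc1z) (ppoly_deg n c2 d hc2z))
    calc (ppoly n c1 + ppoly n c2).natDegree
        * (Polynomial.C (2 : ℝ) * Polynomial.X).natDegree ≤ d * 1 :=
          Nat.mul_le_mul h1' hlin1
      _ = d := by omega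
  have hdegO : pO.natDegree ≤ d := by
    refine Polynomial.natDegree_comp_le.trans ?_
    have h1' : (ppoly n c1 - ppoly n c2).natDegree ≤ d :=
      (Polynomial.natDegree_sub_le _ _).trans
        (max_le (ppoly_deg n c1 d hc1z) (ppoly_deg n c2 d hc2z))
    calc (ppoly n c1 - ppoly n c2).natDegree
        * (Polynomial.C (2 : ℝ) * Polynomial.X + Polynomial.C 1).natDegree ≤ d * 1 :=
          Nat.mul_le_mul h1' hlin2
      _ = d := by omega
  have hEeval : ∀ j : ℕ, 2 * j ≤ n → pE.eval (j : ℝ) = boolToReal (f (xcan n (2 * j))) := by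
    intro j hj
    rw [hpE, Polynomial.eval_comp, Polynomial.eval_mul, Polynomial.eval_C, Polynomial.eval_X]
    rw [show (2 : ℝ) * (j : ℝ) = ((2 * j : ℕ) : ℝ) by norm_cast]
    rw [Polynomial.eval_add, ppoly_eval n c1 (2 * j) hj, ppoly_eval n c2 (2 * j) hj,
      hg (2 * j) hj]
    rw [show ((-1 : ℝ)) ^ (2 * j) = 1 from Even.neg_one_pow ⟨j, two_mul j⟩]
    ring
  have hOeval : ∀ j : ℕ, 2 * j + 1 ≤ n →
      pO.eval (j : ℝ) = boolToReal (f (xcan n (2 * j + 1))) := by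
    intro j hj
    rw [hpO, Polynomial.eval_comp, Polynomial.eval_add, Polynomial.eval_mul,
      Polynomial.eval_C, Polynomial.eval_C, Polynomial.eval_X]
    rw [show (2 : ℝ) * (j : ℝ) + 1 = ((2 * j + 1 : ℕ) : ℝ) by norm_cast]
    rw [Polynomial.eval_sub, ppoly_eval n c1 (2 * j + 1) hj, ppoly_eval n c2 (2 * j + 1) hj,
      hg (2 * j + 1) hj]
    rw [show ((-1 : ℝ)) ^ (2 * j + 1) = -1 from Odd.neg_one_pow ⟨j, rfl⟩]
    ring
  have hbool : ∀ m : ℕ, boolToReal (f (xcan n m)) = 0 ∨ boolToReal (f (xcan n m)) = 1 := by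
    intro m; rw [boolToReal]; cases f (xcan n m) <;> simp
  have hE01 : pE = 0 ∨ pE = 1 :=
    const_of_low_degree pE d (n / 2) hdegE (by omega)
      (fun j hj => by rw [hEeval j (by omega)]; exact hbool _)
  have hO01 : pO = 0 ∨ pO = 1 :=
    const_of_low_degree pO d ((n - 1) / 2) hdegO (by omega)
      (fun j hj => by rw [hOeval j (by omega)]; exact hbool _)
  have bfalse : ∀ b : Bool, boolToReal b = 0 → b = false := by
    intro b; cases b <;> simp [boolToReal]
  have btrue : ∀ b : Bool, boolToReal b = 1 → b = true := by
    intro b; cases b <;> simp [boolToReal]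
  have valE : ∀ m, m ≤ n → m % 2 = 0 →
      boolToReal (f (xcan n m)) = pE.eval ((m / 2 : ℕ) : ℝ) := by
    intro m hm hp
    have h2 : 2 * (m / 2) = m := by omega
    have := (hEeval (m / 2) (by omega)).symm
    rw [h2] at this
    exact this
  have valO : ∀ m, m ≤ n → m % 2 = 1 →
      boolToReal (f (xcan n m)) = pO.eval ((m / 2 : ℕ) : ℝ) := by
    intro m hm hp
    have h2 : 2 * (m / 2) + 1 = m := by omega
    have := (hOeval (m / 2) (by omega)).symm
    rw [h2] at this
    exact this
  have hxle : ∀ x : Fin n → Bool, wt x ≤ n :=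
    fun x => (wt_le_card x).trans_eq (Fintype.card_fin n)
  have hfx : ∀ x : Fin n → Bool, f x = f (xcan n (wt x)) :=
    fun x => hsymm _ _ (by rw [ham_eq_wt, ham_eq_wt, wt_xcan (hxle x)])
  rcases hE01 with hE | hE <;> rcases hO01 with hO | hO
  · apply h0
    funext x
    rw [hfx x]
    apply bfalse
    rcases Nat.mod_two_eq_zero_or_one (wt x) with hp | hp
    · rw [valE _ (hxle x) hp, hE, Polynomial.eval_zero]
    · rw [valO _ (hxle x) hp, hO, Polynomial.eval_zero]
  · apply hpar
    funext x
    have hham : hammingWeight x % 2 = wt x % 2 := by rw [ham_eq_wt]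
    rw [hfx x]
    rcases Nat.mod_two_eq_zero_or_one (wt x) with hp | hp
    · have hdec : decide (hammingWeight x % 2 = 1) = false := by
        rw [hham, hp]; simp
      rw [hdec]
      apply bfalse
      rw [valE _ (hxle x) hp, hE, Polynomial.eval_zero]
    · have hdec : decide (hammingWeight x % 2 = 1) = true := by
        rw [hham, hp]; simp
      rw [hdec]
      apply btrue
      rw [valO _ (hxle x) hp, hO, Polynomial.eval_one]
  · apply hnpar
    funext x
    have hham : hammingWeight x % 2 = wt x % 2 := by rw [ham_eq_wt]
    rw [hfx x]
    rcases Nat.mod_two_eq_zero_or_one (wt x) with hp | hp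
    · have hdec : (!decide (hammingWeight x % 2 = 1)) = true := by
        rw [hham, hp]; simp
      rw [hdec]
      apply btrue
      rw [valE _ (hxle x) hp, hE, Polynomial.eval_one]
    · have hdec : (!decide (hammingWeight x % 2 = 1)) = false := by
        rw [hham, hp]; simp
      rw [hdec]
      apply bfalse
      rw [valO _ (hxle x) hp, hO, Polynomial.eval_zero]
  · apply h1
    funext x
    rw [hfx x]
    apply btrue
    rcases Nat.mod_two_eq_zero_or_one (wt x) with hp | hp
    · rw [valE _ (hxle x) hp, hE, Polynomial.eval_one]
    · rw [valO _ (hxle x) hp, hO, Polynomial.eval_one]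

end SymXOR
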